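/- Let α, β ∈ ℝ with β not a positive integer. The power series v(x) = Σ_{k=0}^∞ (−αβ)^k · x^k / (k! · (1−β)_k) converges for every real x, and the function v satisfies x·v″(x) + (1 − β)·v′(x) + α·β·v(x) = 0 for all x ∈ ℝ. (This is the regular-at-zero solution of the linearized Riccati equation used in the paper.) -/

import Mathlib

/-- The coefficients `(-αβ)^k / (k! (1-β)_k)` of the regular-at-zero solution of the
linearized Riccati equation, where `(c)_k` is the Pochhammer symbol. -/
noncomputable def riccatiRegularCoeff (α β : ℝ) (k : ℕ) : ℝ :=
  (-(α * β)) ^ k / ((k.factorial : ℝ) * (ascPochhammer ℝ k).eval (1 - β))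

namespace RiccatiAux

variable {α β : ℝ}

lemma poch_ne (hβ : ∀ k : ℕ, 0 < k → β ≠ (k : ℝ)) (n : ℕ) :
    (ascPochhammer ℝ n).eval (1 - β) ≠ 0 := by
  induction n with
  | zero => simp
  | succ n ih =>
    rw [ascPochhammer_succ_eval]
    refine mul_ne_zero ih fun h => hβ (n + 1) (Nat.succ_pos n) ?_
    push_cast
    linarith

lemma recur (hβ : ∀ k : ℕ, 0 < k → β ≠ (k : ℝ)) (n : ℕ) :
    ((n : ℝ) + 1) * (((n : ℝ) + 1) - β) * riccatiRegularCoeff α β (n + 1)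
      = -(α * β) * riccatiRegularCoeff α β n := by
  have hP := poch_ne hβ n
  have hf : ((n.factorial : ℝ)) ≠ 0 := Nat.cast_ne_zero.2 n.factorial_ne_zero
  have h1 : (1 : ℝ) - β + n ≠ 0 := by
    intro h
    exact hβ (n + 1) (Nat.succ_pos n) (by push_cast; linarith)
  unfold riccatiRegularCoeff
  rw [ascPochhammer_succ_eval, Nat.factorial_succ, pow_succ]
  push_cast
  field_simp
  ring

lemma abs_recur (hβ : ∀ k : ℕ, 0 < k → β ≠ (k : ℝ)) (n : ℕ) :
    |riccatiRegularCoeff α β (n + 1)| * (((n : ℝ) + 1) * |((n : ℝ) + 1) - β|)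
      = |α * β| * |riccatiRegularCoeff α β n| := by
  have h := congrArg abs (recur (α := α) hβ n)
  rw [abs_mul, abs_mul, abs_mul, abs_neg] at h
  rw [abs_of_pos (by positivity : (0:ℝ) < (n : ℝ) + 1)] at h
  linarith [h]

lemma summable_key (hβ : ∀ k : ℕ, 0 < k → β ≠ (k : ℝ)) (b : ℝ) (hb : 0 ≤ b) :
    Summable fun n : ℕ => ((n : ℝ) + 1) ^ 2 * |riccatiRegularCoeff α β n| * b ^ n := by
  apply summable_of_ratio_norm_eventually_le (r := 1/2) (by norm_num)
  have hev : ∀ᶠ n : ℕ in Filter.atTop, max β (8 * (|α * β| * b)) ≤ (n : ℝ) :=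
    tendsto_natCast_atTop_atTop.eventually_ge_atTop _
  filter_upwards [hev] with n hn
  have hnβ : β ≤ (n : ℝ) := le_trans (le_max_left _ _) hn
  have hn8 : 8 * (|α * β| * b) ≤ (n : ℝ) := le_trans (le_max_right _ _) hn
  set A := |riccatiRegularCoeff α β (n + 1)| with hA
  set B := |riccatiRegularCoeff α β n| with hB
  have hA0 : 0 ≤ A := abs_nonneg _
  have hB0 : 0 ≤ B := abs_nonneg _
  have habs : |((n : ℝ) + 1) - β| = ((n : ℝ) + 1) - β := abs_of_pos (by linarith)
  have hrec : A * (((n : ℝ) + 1) * (((n : ℝ) + 1) - β)) = |α * β| * B := by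
    have := abs_recur (α := α) hβ n
    rw [habs] at this; exact this
  have h2 : (1 : ℝ) ≤ ((n : ℝ) + 1) - β := by linarith
  have h1 : A * ((n : ℝ) + 1) ≤ |α * β| * B := by
    rw [← mul_assoc] at hrec
    have h3 := mul_le_mul_of_nonneg_left h2
      (mul_nonneg hA0 (by positivity : (0:ℝ) ≤ (n : ℝ) + 1))
    rw [mul_one] at h3
    linarith [h3]
  have ht : (0 : ℝ) ≤ b ^ n := by positivity
  rw [Real.norm_eq_abs, Real.norm_eq_abs, abs_of_nonneg (by positivity),
    abs_of_nonneg (by positivity)]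
  push_cast
  have hb8 : |α * β| * b ≤ ((n : ℝ)) / 8 := by linarith
  have key : ((n : ℝ) + 1 + 1) ^ 2 * A * b ^ (n + 1)
      ≤ 1 / 2 * (((n : ℝ) + 1) ^ 2 * B * b ^ n) := by
    have hbs : b ^ (n + 1) = b ^ n * b := pow_succ b n
    rw [hbs]
    have c1 : ((n : ℝ) + 1 + 1) ^ 2 ≤ 4 * ((n : ℝ) + 1) ^ 2 := by
      nlinarith [Nat.cast_nonneg (α := ℝ) n]
    have e1 : ((n:ℝ)+1+1)^2 * A * (b^n * b) ≤ (4*((n:ℝ)+1)^2) * A * (b^n*b) :=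
      mul_le_mul_of_nonneg_right (mul_le_mul_of_nonneg_right c1 hA0) (by positivity)
    have e2 : (4*((n:ℝ)+1)^2) * A * (b^n*b) = (4*((n:ℝ)+1)*(b^n*b)) * (A*((n:ℝ)+1)) := by ring
    have e3 : (4*((n:ℝ)+1)*(b^n*b)) * (A*((n:ℝ)+1)) ≤ (4*((n:ℝ)+1)*(b^n*b)) * (|α * β| * B) :=
      mul_le_mul_of_nonneg_left h1 (by positivity)
    have e4 : (4*((n:ℝ)+1)*(b^n*b)) * (|α * β| * B) = (4*((n:ℝ)+1)*b^n*B) * (|α * β| * b) := by ring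
    have e5 : (4*((n:ℝ)+1)*b^n*B) * (|α * β| * b) ≤ (4*((n:ℝ)+1)*b^n*B) * ((n:ℝ)/8) :=
      mul_le_mul_of_nonneg_left hb8 (by positivity)
    have e6 : (4*((n:ℝ)+1)*b^n*B) * ((n:ℝ)/8) ≤ 1/2*(((n:ℝ)+1)^2 * B * b^n) := by
      nlinarith [mul_nonneg (mul_nonneg (by positivity : (0:ℝ) ≤ (n:ℝ)+1) hB0) ht,
        Nat.cast_nonneg (α := ℝ) n]
    linarith
  linarith [key]

end RiccatiAux

/-- **The regular-at-zero solution of the linearized Riccati equation**: for `β` not a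
positive integer, the series `v(x) = ∑_{k} (-αβ)^k x^k / (k! (1-β)_k)` converges for every
real `x` and satisfies `x v'' + (1-β) v' + α β v = 0` on all of `ℝ`. -/
theorem riccati_regular_solution (α β : ℝ) (hβ : ∀ k : ℕ, 0 < k → β ≠ (k : ℝ)) :
    (∀ x : ℝ, Summable fun k : ℕ => riccatiRegularCoeff α β k * x ^ k) ∧
      (∀ x : ℝ,
        x * deriv (deriv (fun t : ℝ => ∑' k : ℕ, riccatiRegularCoeff α β k * t ^ k)) x
          + (1 - β) * deriv (fun t : ℝ => ∑' k : ℕ, riccatiRegularCoeff α β k * t ^ k) x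
          + α * β * ∑' k : ℕ, riccatiRegularCoeff α β k * x ^ k = 0) := by
  set c := riccatiRegularCoeff α β with hc
  -- summability everywhere
  have hsum : ∀ x : ℝ, Summable fun k : ℕ => c k * x ^ k := by
    intro x
    refine Summable.of_norm_bounded (RiccatiAux.summable_key (α := α) hβ |x| (abs_nonneg x))
      fun n => ?_
    rw [Real.norm_eq_abs, abs_mul, abs_pow]
    have h1 : (1 : ℝ) ≤ ((n : ℝ) + 1) ^ 2 := by nlinarith [Nat.cast_nonneg (α := ℝ) n]
    nlinarith [abs_nonneg (c n), pow_nonneg (abs_nonneg x) n,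
      mul_nonneg (abs_nonneg (c n)) (pow_nonneg (abs_nonneg x) n)]
  refine ⟨hsum, fun x => ?_⟩
  set R : ℝ := |x| + 1 with hR
  have hR1 : (1 : ℝ) ≤ R := le_add_of_nonneg_left (abs_nonneg x)
  have hR0 : (0 : ℝ) ≤ R := by linarith
  set t : Set ℝ := Metric.ball (0 : ℝ) R with htdef
  have htopen : IsOpen t := Metric.isOpen_ball
  have htconn : IsPreconnected t := (convex_ball (0:ℝ) R).isPreconnected
  have hxt : x ∈ t := by
    simp only [htdef, Metric.mem_ball, dist_zero_right, Real.norm_eq_abs]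
    linarith
  have h0t : (0 : ℝ) ∈ t := by
    simp only [htdef, Metric.mem_ball, dist_zero_right, norm_zero]
    linarith
  have hu : Summable fun n : ℕ => ((n : ℝ) + 1) ^ 2 * |c n| * R ^ n := by
    have := RiccatiAux.summable_key (α := α) hβ R hR0
    simpa [hc] using this
  have hymem : ∀ y : ℝ, y ∈ t → |y| ≤ R := by
    intro y hy
    simp only [htdef, Metric.mem_ball, dist_zero_right, Real.norm_eq_abs] at hy
    linarith
  have hpowle : ∀ (y : ℝ), y ∈ t → ∀ m n : ℕ, m ≤ n → |y| ^ m ≤ R ^ n := by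
    intro y hy m n hmn
    calc |y| ^ m ≤ R ^ m := pow_le_pow_left₀ (abs_nonneg y) (hymem y hy) m
      _ ≤ R ^ n := pow_le_pow_right₀ hR1 hmn
  -- first derivative
  have hd1 : ∀ y ∈ t, HasDerivAt (fun z : ℝ => ∑' n : ℕ, c n * z ^ n)
      (∑' n : ℕ, c n * ((n : ℝ) * y ^ (n - 1))) y := by
    intro y hy
    refine hasDerivAt_tsum_of_isPreconnected
      (g := fun (n : ℕ) (z : ℝ) => c n * z ^ n)
      (g' := fun (n : ℕ) (y : ℝ) => c n * ((n : ℝ) * y ^ (n - 1)))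
      hu htopen htconn
      (fun n z _ => (hasDerivAt_pow n z).const_mul (c n)) ?_ h0t ?_ hy
    · intro n z hz
      rw [Real.norm_eq_abs, abs_mul, abs_mul, abs_pow, Nat.abs_cast]
      have h1 : |z| ^ (n - 1) ≤ R ^ n := hpowle z hz _ _ (Nat.sub_le n 1)
      have h2 : (n : ℝ) ≤ ((n : ℝ) + 1) ^ 2 := by nlinarith [Nat.cast_nonneg (α := ℝ) n]
      calc |c n| * ((n : ℝ) * |z| ^ (n - 1))
          ≤ |c n| * (((n : ℝ) + 1) ^ 2 * R ^ n) := by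
            refine mul_le_mul_of_nonneg_left ?_ (abs_nonneg _)
            exact mul_le_mul h2 h1 (by positivity) (by positivity)
        _ = ((n : ℝ) + 1) ^ 2 * |c n| * R ^ n := by ring
    · exact hsum 0
  -- second derivative
  have hd2 : ∀ y ∈ t, HasDerivAt (fun z : ℝ => ∑' n : ℕ, c n * ((n : ℝ) * z ^ (n - 1)))
      (∑' n : ℕ, c n * (n : ℝ) * (((n - 1 : ℕ) : ℝ) * y ^ (n - 1 - 1))) y := by
    intro y hy
    refine hasDerivAt_tsum_of_isPreconnected
      (g := fun (n : ℕ) (z : ℝ) => c n * ((n : ℝ) * z ^ (n - 1)))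
      (g' := fun (n : ℕ) (y : ℝ) => c n * (n : ℝ) * (((n - 1 : ℕ) : ℝ) * y ^ (n - 1 - 1)))
      hu htopen htconn (fun n z _ => ?_) ?_ h0t ?_ hy
    · have h := (hasDerivAt_pow (n - 1) z).const_mul (c n * (n : ℝ))
      simpa [mul_assoc] using h
    · intro n z hz
      rw [Real.norm_eq_abs, abs_mul, abs_mul, abs_mul, abs_pow, Nat.abs_cast, Nat.abs_cast]
      have h1 : |z| ^ (n - 1 - 1) ≤ R ^ n := hpowle z hz _ _ (le_trans (Nat.sub_le _ 1) (Nat.sub_le n 1))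
      have hm : ((n - 1 : ℕ) : ℝ) ≤ (n : ℝ) := by exact_mod_cast Nat.sub_le n 1
      have h2 : (n : ℝ) * ((n - 1 : ℕ) : ℝ) ≤ ((n : ℝ) + 1) ^ 2 := by
        nlinarith [Nat.cast_nonneg (α := ℝ) n, Nat.cast_nonneg (α := ℝ) (n - 1)]
      calc |c n| * (n : ℝ) * (((n - 1 : ℕ) : ℝ) * |z| ^ (n - 1 - 1))
          ≤ |c n| * (((n : ℝ) + 1) ^ 2 * R ^ n) := by
            rw [mul_assoc, ← mul_assoc ((n:ℝ)) _ _]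
            refine mul_le_mul_of_nonneg_left ?_ (abs_nonneg _)
            exact mul_le_mul h2 h1 (by positivity) (by positivity)
        _ = ((n : ℝ) + 1) ^ 2 * |c n| * R ^ n := by ring
    · refine Summable.of_norm_bounded hu fun n => ?_
      rw [Real.norm_eq_abs, abs_mul, abs_mul, abs_pow, Nat.abs_cast]
      have h1 : |(0:ℝ)| ^ (n - 1) ≤ R ^ n := hpowle 0 h0t _ _ (Nat.sub_le n 1)
      have h2 : (n : ℝ) ≤ ((n : ℝ) + 1) ^ 2 := by nlinarith [Nat.cast_nonneg (α := ℝ) n]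
      calc |c n| * ((n : ℝ) * |(0:ℝ)| ^ (n - 1))
          ≤ |c n| * (((n : ℝ) + 1) ^ 2 * R ^ n) :=
            mul_le_mul_of_nonneg_left (mul_le_mul h2 h1 (by positivity) (by positivity))
              (abs_nonneg _)
        _ = ((n : ℝ) + 1) ^ 2 * |c n| * R ^ n := by ring
  -- identify derivatives
  have hEv : deriv (fun z : ℝ => ∑' n : ℕ, c n * z ^ n)
      =ᶠ[nhds x] fun y : ℝ => ∑' n : ℕ, c n * ((n : ℝ) * y ^ (n - 1)) := by
    filter_upwards [htopen.mem_nhds hxt] with y hy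
    exact (hd1 y hy).deriv
  have hD2 : deriv (deriv (fun z : ℝ => ∑' n : ℕ, c n * z ^ n)) x
      = ∑' n : ℕ, c n * (n : ℝ) * (((n - 1 : ℕ) : ℝ) * x ^ (n - 1 - 1)) := by
    rw [hEv.deriv_eq]
    exact (hd2 x hxt).deriv
  have hD1 : deriv (fun z : ℝ => ∑' n : ℕ, c n * z ^ n) x
      = ∑' n : ℕ, c n * ((n : ℝ) * x ^ (n - 1)) := (hd1 x hxt).deriv
  -- summability of each family at x
  have hb0 : ∀ n : ℕ, ‖c n * ((n : ℝ) * x ^ (n - 1))‖ ≤ ((n : ℝ) + 1) ^ 2 * |c n| * R ^ n := by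
    intro n
    rw [Real.norm_eq_abs, abs_mul, abs_mul, abs_pow, Nat.abs_cast]
    have h1 : |x| ^ (n - 1) ≤ R ^ n := hpowle x hxt _ _ (Nat.sub_le n 1)
    have h2 : (n : ℝ) ≤ ((n : ℝ) + 1) ^ 2 := by nlinarith [Nat.cast_nonneg (α := ℝ) n]
    calc |c n| * ((n : ℝ) * |x| ^ (n - 1))
        ≤ |c n| * (((n : ℝ) + 1) ^ 2 * R ^ n) :=
          mul_le_mul_of_nonneg_left (mul_le_mul h2 h1 (by positivity) (by positivity)) (abs_nonneg _)
      _ = ((n : ℝ) + 1) ^ 2 * |c n| * R ^ n := by ring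
  have hS1 : Summable fun n : ℕ => c n * ((n : ℝ) * x ^ (n - 1)) :=
    Summable.of_norm_bounded hu hb0
  have hS2 : Summable fun n : ℕ => c n * (n : ℝ) * (((n - 1 : ℕ) : ℝ) * x ^ (n - 1 - 1)) := by
    refine Summable.of_norm_bounded hu fun n => ?_
    rw [Real.norm_eq_abs, abs_mul, abs_mul, abs_mul, abs_pow, Nat.abs_cast, Nat.abs_cast]
    have h1 : |x| ^ (n - 1 - 1) ≤ R ^ n := hpowle x hxt _ _ (le_trans (Nat.sub_le _ 1) (Nat.sub_le n 1))
    have h2 : (n : ℝ) * ((n - 1 : ℕ) : ℝ) ≤ ((n : ℝ) + 1) ^ 2 := by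
      have hm : ((n - 1 : ℕ) : ℝ) ≤ (n : ℝ) := by exact_mod_cast Nat.sub_le n 1
      nlinarith [Nat.cast_nonneg (α := ℝ) n, Nat.cast_nonneg (α := ℝ) (n - 1)]
    calc |c n| * (n : ℝ) * (((n - 1 : ℕ) : ℝ) * |x| ^ (n - 1 - 1))
        ≤ |c n| * (((n : ℝ) + 1) ^ 2 * R ^ n) := by
          rw [mul_assoc, ← mul_assoc ((n:ℝ)) _ _]
          exact mul_le_mul_of_nonneg_left (mul_le_mul h2 h1 (by positivity) (by positivity)) (abs_nonneg _)
      _ = ((n : ℝ) + 1) ^ 2 * |c n| * R ^ n := by ring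
  have hS0 : Summable fun n : ℕ => c n * x ^ n := hsum x
  -- the telescoping series
  set T : ℕ → ℝ := fun n =>
    x * (c n * (n : ℝ) * (((n - 1 : ℕ) : ℝ) * x ^ (n - 1 - 1)))
      + ((1 - β) * (c n * ((n : ℝ) * x ^ (n - 1))) + α * β * (c n * x ^ n)) with hT
  have hTsum : Summable T := ((hS2.mul_left x).add ((hS1.mul_left (1 - β)).add
    (hS0.mul_left (α * β))))
  have hTpartial : ∀ n : ℕ, (∑ i ∈ Finset.range (n + 1), T i) = α * β * (c n * x ^ n) := by
    intro n
    induction n with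
    | zero => simp [hT]
    | succ n ih =>
      rw [Finset.sum_range_succ, ih]
      have hrec := RiccatiAux.recur (α := α) hβ n
      rw [← hc] at hrec
      cases n with
      | zero =>
        simp only [hT]
        norm_num at hrec ⊢
        linear_combination hrec
      | succ m =>
        simp only [hT, Nat.add_sub_cancel]
        push_cast at hrec ⊢
        linear_combination (x ^ (m + 1)) * hrec
  have hTzero : (∑' n : ℕ, T n) = 0 := by
    have h1 : Filter.Tendsto (fun N : ℕ => ∑ i ∈ Finset.range (N + 1), T i)
        Filter.atTop (nhds (∑' n, T n)) :=
      hTsum.hasSum.tendsto_sum_nat.comp (Filter.tendsto_add_atTop_nat 1)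
    have h2 : Filter.Tendsto (fun N : ℕ => α * β * (c N * x ^ N)) Filter.atTop (nhds 0) :=
      (hS0.mul_left (α * β)).tendsto_atTop_zero
    have h3 : (fun N : ℕ => ∑ i ∈ Finset.range (N + 1), T i)
        = fun N : ℕ => α * β * (c N * x ^ N) := funext hTpartial
    rw [h3] at h1
    exact tendsto_nhds_unique h1 h2
  rw [hD2, hD1, ← tsum_mul_left, ← tsum_mul_left, ← tsum_mul_left,
    add_assoc, ← Summable.tsum_add (hS1.mul_left (1 - β)) (hS0.mul_left (α * β)),
    ← Summable.tsum_add (hS2.mul_left x) ((hS1.mul_left (1 - β)).add (hS0.mul_left (α * β)))]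
  exact hTzero
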